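/- Jacobi polynomials normalized at 1 converge to the normalized Bessel function: for fixed α, β > -1 and fixed real x, lim_{n→∞} P_n^{(α,β)}(cos(x/n)) / P_n^{(α,β)}(1) = 𝒥_α(x), where P_n^{(α,β)} is the Jacobi polynomial and 𝒥_α(x) = Σ_{k=0}^{∞} (-x²/4)^k / ((α+1)_k k!). -/

import Mathlib

open Filter

/-- Pochhammer symbol `(a)_k = a (a+1) ⋯ (a+k-1)`. -/
noncomputable def poch (a : ℝ) (k : ℕ) : ℝ := ∏ i ∈ Finset.range k, (a + i)

/-- Jacobi polynomial
`P_n^{(α,β)}(y) = ((α+1)_n/n!) ₂F₁(-n, n+α+β+1; α+1; (1-y)/2)`. -/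
noncomputable def jacobiP (n : ℕ) (α β : ℝ) (y : ℝ) : ℝ :=
  poch (α + 1) n / Nat.factorial n *
    ∑ k ∈ Finset.range (n + 1),
      poch (-(n : ℝ)) k * poch ((n : ℝ) + α + β + 1) k /
        (poch (α + 1) k * Nat.factorial k) * ((1 - y) / 2) ^ k

/-- Normalized Bessel function `𝒥_α(x) = ∑ (-x²/4)^k / ((α+1)_k k!)`. -/
noncomputable def normBessel (α : ℝ) (x : ℝ) : ℝ :=
  ∑' k : ℕ, (-(x ^ 2) / 4) ^ k / (poch (α + 1) k * Nat.factorial k)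

private lemma poch_zero' (a : ℝ) : poch a 0 = 1 := by simp [poch]

private lemma poch_pos {a : ℝ} (ha : 0 < a) (k : ℕ) : 0 < poch a k :=
  Finset.prod_pos fun i _ => by positivity

private lemma poch_nat_zero {n k : ℕ} (h : n < k) : poch (-(n : ℝ)) k = 0 :=
  Finset.prod_eq_zero (Finset.mem_range.2 h) (by simp)

private lemma min_le_poch {a : ℝ} (ha : 0 < a) (k : ℕ) : min 1 a ≤ poch a k := by
  cases k with
  | zero => simp [poch_zero']
  | succ j =>
    have h1 : poch a (j + 1) = (∏ i ∈ Finset.range j, (a + 1 + i)) * a := by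
      rw [poch, Finset.prod_range_succ']
      congr 1
      · exact Finset.prod_congr rfl fun i _ => by push_cast; ring
      · simp
    have h2 : (1 : ℝ) ≤ ∏ i ∈ Finset.range j, (a + 1 + i) := by
      have := Finset.prod_le_prod (s := Finset.range j) (f := fun _ => (1:ℝ))
        (g := fun i : ℕ => a + 1 + (i:ℝ)) (fun (i:ℕ) _ => zero_le_one)
        (fun (i:ℕ) _ => by show (1:ℝ) ≤ a + 1 + (i:ℝ); have : (0:ℝ) ≤ (i:ℝ) := Nat.cast_nonneg i; linarith)
      simpa using this
    rw [h1]
    calc min 1 a ≤ a := min_le_right _ _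
      _ ≤ _ := le_mul_of_one_le_left ha.le h2

private lemma half_angle (u : ℝ) : (1 - Real.cos u) / 2 = Real.sin (u / 2) ^ 2 := by
  have h := Real.cos_sq (u / 2)
  have h2 := Real.sin_sq_add_cos_sq (u / 2)
  rw [show 2 * (u / 2) = u by ring] at h
  linarith

private lemma tendsto_n_sin (x : ℝ) :
    Tendsto (fun n : ℕ => (n : ℝ) * Real.sin (x / (2 * n))) atTop (nhds (x / 2)) := by
  by_cases hx : x = 0
  · simp [hx]
  · have hslope : Tendsto (fun y : ℝ => y⁻¹ * Real.sin y) (nhdsWithin 0 {0}ᶜ) (nhds 1) := by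
      have h := Real.hasDerivAt_sin 0
      rw [hasDerivAt_iff_tendsto_slope] at h
      simpa [slope_fun_def, Real.sin_zero, Real.cos_zero] using h
    have hu : Tendsto (fun n : ℕ => x / (2 * n)) atTop (nhdsWithin 0 {0}ᶜ) := by
      rw [tendsto_nhdsWithin_iff]
      constructor
      · exact Tendsto.div_atTop tendsto_const_nhds
          (tendsto_natCast_atTop_atTop.const_mul_atTop (by norm_num))
      · filter_upwards [eventually_ge_atTop 1] with n hn
        have hn' : (0:ℝ) < n := by exact_mod_cast hn
        simp only [Set.mem_compl_iff, Set.mem_singleton_iff]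
        positivity
    have h2 := (hslope.comp hu).const_mul (x / 2)
    apply (h2.congr' ?_).mono_right ?_
    · filter_upwards [eventually_ge_atTop 1] with n hn
      have hn' : (0:ℝ) < n := by exact_mod_cast hn
      have hne : x / (2 * (n:ℝ)) ≠ 0 := by positivity
      simp only [Function.comp_apply]
      field_simp
    · rw [mul_one]

private noncomputable def gfun (α β x : ℝ) (n k : ℕ) : ℝ :=
  poch (-(n : ℝ)) k * poch ((n : ℝ) + α + β + 1) k /
    (poch (α + 1) k * Nat.factorial k) * ((1 - Real.cos (x / n)) / 2) ^ k

private lemma gfun_eq (α β x : ℝ) (n k : ℕ) : gfun α β x n k =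
    (∏ i ∈ Finset.range k,
      ((-(n:ℝ) + i) * (((n:ℝ) + α + β + 1) + i) * ((1 - Real.cos (x / n)) / 2)))
      / (poch (α + 1) k * Nat.factorial k) := by
  unfold gfun
  rw [div_mul_eq_mul_div]
  congr 1
  rw [Finset.prod_mul_distrib, Finset.prod_mul_distrib, Finset.prod_const,
    Finset.card_range, poch, poch]

theorem jacobi_to_bessel_limit (α β : ℝ) (hα : -1 < α) (hβ : -1 < β) (x : ℝ) :
    Tendsto (fun n : ℕ => jacobiP n α β (Real.cos (x / n)) / jacobiP n α β 1)
      atTop (nhds (normBessel α x)) := by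
  have hα1 : (0:ℝ) < α + 1 := by linarith
  set m : ℝ := min 1 (α + 1) with hm
  have hm0 : 0 < m := lt_min one_pos hα1
  set M : ℝ := (2 + |α + β + 1|) * x ^ 2 / 4 with hMdef
  have hM0 : 0 ≤ M := by positivity
  -- n² tₙ → x²/4
  have hsq : Tendsto (fun n : ℕ => (n:ℝ)^2 * ((1 - Real.cos (x / n)) / 2)) atTop
      (nhds (x ^ 2 / 4)) := by
    have heq : ∀ n : ℕ, (n:ℝ)^2 * ((1 - Real.cos (x / n)) / 2)
        = ((n:ℝ) * Real.sin (x / (2 * n))) * ((n:ℝ) * Real.sin (x / (2 * n))) := by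
      intro n
      rw [half_angle (x / n), show x / (n:ℝ) / 2 = x / (2 * n) by rw [div_div, mul_comm]]
      ring
    have h := (tendsto_n_sin x).mul (tendsto_n_sin x)
    rw [show x / 2 * (x / 2) = x ^ 2 / 4 by ring] at h
    exact h.congr fun n => (heq n).symm
  -- pointwise limits
  have hpt : ∀ k : ℕ, Tendsto (fun n : ℕ => gfun α β x n k) atTop
      (nhds ((-(x ^ 2) / 4) ^ k / (poch (α + 1) k * Nat.factorial k))) := by
    intro k
    simp only [gfun_eq]
    apply Tendsto.div_const
    have hprod : Tendsto (fun n : ℕ => ∏ i ∈ Finset.range k,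
        ((-(n:ℝ) + i) * (((n:ℝ) + α + β + 1) + i) * ((1 - Real.cos (x / n)) / 2))) atTop
        (nhds (∏ _i ∈ Finset.range k, (-(x ^ 2) / 4))) := by
      apply tendsto_finset_prod
      intro i _
      have h1 : Tendsto (fun n : ℕ => (i:ℝ)/n - 1) atTop (nhds (0 - 1)) :=
        (tendsto_const_div_atTop_nhds_zero_nat _).sub_const 1
      have h2 : Tendsto (fun n : ℕ => 1 + (α + β + 1 + i)/n) atTop (nhds (1 + 0)) :=
        tendsto_const_nhds.add (tendsto_const_div_atTop_nhds_zero_nat _)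
      have h3 := (h1.mul h2).mul hsq
      rw [show (0 - 1) * (1 + 0) * (x ^ 2 / 4) = -(x ^ 2) / 4 by ring] at h3
      apply h3.congr'
      filter_upwards [eventually_ge_atTop 1] with n hn
      have hn' : (0:ℝ) < n := by exact_mod_cast hn
      field_simp
      ring
    rw [Finset.prod_const, Finset.card_range] at hprod
    exact hprod
  -- uniform bound
  have hbd : ∀ᶠ n : ℕ in atTop, ∀ k : ℕ,
      ‖gfun α β x n k‖ ≤ (1/m) * (M ^ k / Nat.factorial k) := by
    filter_upwards [eventually_ge_atTop 1] with n hn k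
    have hn' : (1:ℝ) ≤ (n:ℝ) := by exact_mod_cast hn
    have hn0 : (0:ℝ) < n := by linarith
    have hfact : (0:ℝ) < Nat.factorial k := by exact_mod_cast k.factorial_pos
    rcases le_or_gt k n with hkn | hkn
    · have hD : 0 < poch (α + 1) k * (Nat.factorial k : ℝ) :=
        mul_pos (poch_pos hα1 k) hfact
      rw [Real.norm_eq_abs, gfun_eq, abs_div, abs_of_pos hD]
      have hfac : ∀ i ∈ Finset.range k,
          |(-(n:ℝ) + i) * (((n:ℝ) + α + β + 1) + i) * ((1 - Real.cos (x / n)) / 2)| ≤ M := by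
        intro i hi
        have hik : i < k := Finset.mem_range.1 hi
        have hiN : (i:ℝ) ≤ (n:ℝ) := by exact_mod_cast le_trans (le_of_lt hik) hkn
        have hi0 : (0:ℝ) ≤ (i:ℝ) := Nat.cast_nonneg i
        have hc1 : α + β + 1 ≤ |α + β + 1| := le_abs_self _
        have hc2 : -|α + β + 1| ≤ α + β + 1 := neg_abs_le _
        have hc0 : (0:ℝ) ≤ |α + β + 1| := abs_nonneg _
        have ha : |(-(n:ℝ) + i)| ≤ (n:ℝ) := abs_le.2 ⟨by linarith, by linarith⟩
        have hb : |((n:ℝ) + α + β + 1) + i| ≤ (2 + |α + β + 1|) * (n:ℝ) := by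
          apply abs_le.2
          constructor
          · nlinarith
          · nlinarith
        have ht0 : 0 ≤ (1 - Real.cos (x / n)) / 2 := by
          have := Real.cos_le_one (x / (n:ℝ)); linarith
        have ht : (1 - Real.cos (x / n)) / 2 ≤ (x / n) ^ 2 / 4 := by
          have := Real.one_sub_sq_div_two_le_cos (x := x / (n:ℝ)); linarith
        calc |(-(n:ℝ) + i) * (((n:ℝ) + α + β + 1) + i) * ((1 - Real.cos (x / n)) / 2)|
            = |(-(n:ℝ) + i)| * |((n:ℝ) + α + β + 1) + i| * |(1 - Real.cos (x / n)) / 2| := by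
              rw [abs_mul, abs_mul]
          _ ≤ (n:ℝ) * ((2 + |α + β + 1|) * (n:ℝ)) * ((x / n) ^ 2 / 4) := by
              apply mul_le_mul (mul_le_mul ha hb (abs_nonneg _) (by linarith)) ?_ (abs_nonneg _)
                (by positivity)
              rw [abs_of_nonneg ht0]; exact ht
          _ = M := by rw [hMdef]; field_simp
      have hnum : |∏ i ∈ Finset.range k,
          ((-(n:ℝ) + i) * (((n:ℝ) + α + β + 1) + i) * ((1 - Real.cos (x / n)) / 2))| ≤ M ^ k := by
        rw [Finset.abs_prod]
        calc (∏ i ∈ Finset.range k, |(-(n:ℝ) + i) * (((n:ℝ) + α + β + 1) + i) *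
              ((1 - Real.cos (x / n)) / 2)|) ≤ ∏ _i ∈ Finset.range k, M :=
            Finset.prod_le_prod (fun i _ => abs_nonneg _) hfac
          _ = M ^ k := by rw [Finset.prod_const, Finset.card_range]
      calc |∏ i ∈ Finset.range k,
            ((-(n:ℝ) + i) * (((n:ℝ) + α + β + 1) + i) * ((1 - Real.cos (x / n)) / 2))| /
            (poch (α + 1) k * Nat.factorial k)
          ≤ M ^ k / (poch (α + 1) k * Nat.factorial k) := by gcongr
        _ ≤ (1/m) * (M ^ k / Nat.factorial k) := by
            rw [show (1/m) * (M ^ k / (Nat.factorial k : ℝ)) = M ^ k / (m * Nat.factorial k) by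
              field_simp]
            gcongr
            exact min_le_poch hα1 k
    · have hz : gfun α β x n k = 0 := by
        unfold gfun
        rw [poch_nat_zero hkn]
        ring
      rw [hz]
      simp only [norm_zero]
      positivity
  have hsum : Summable (fun k : ℕ => (1/m) * (M ^ k / Nat.factorial k)) :=
    (Real.summable_pow_div_factorial M).mul_left _
  have hmain := tendsto_tsum_of_dominated_convergence hsum hpt hbd
  have hrat : ∀ n : ℕ, jacobiP n α β (Real.cos (x / n)) / jacobiP n α β 1
      = ∑' k : ℕ, gfun α β x n k := by
    intro n
    have hden : jacobiP n α β 1 = poch (α + 1) n / Nat.factorial n := by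
      rw [jacobiP]
      rw [Finset.sum_eq_single 0 (fun k _ hk => by
        rw [show ((1:ℝ) - 1) / 2 = 0 by norm_num, zero_pow hk, mul_zero])
        (fun h => absurd (Finset.mem_range.2 n.succ_pos) h)]
      simp [poch_zero']
    have htsum : ∑' k : ℕ, gfun α β x n k = ∑ k ∈ Finset.range (n + 1), gfun α β x n k := by
      apply tsum_eq_sum
      intro k hk
      have hnk : n < k := by
        by_contra h
        exact hk (Finset.mem_range.2 (by omega))
      unfold gfun
      rw [poch_nat_zero hnk]
      ring
    have hP : poch (α + 1) n / (Nat.factorial n : ℝ) ≠ 0 :=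
      ne_of_gt (div_pos (poch_pos hα1 n) (by exact_mod_cast n.factorial_pos))
    rw [hden, htsum, jacobiP, mul_comm, mul_div_assoc, div_self hP, mul_one]
    rfl
  rw [funext hrat, normBessel]
  exact hmain
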